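/- For every α ∈ (0,1) and every φ ∈ (0,π), one has (sin(αφ)/sin(φ))^(α/(1−α)) · (sin((1−α)φ)/sin(φ)) ≥ (1−α) · α^(α/(1−α)). -/
import Mathlib

lemma sin_mul_ge (β φ : ℝ) (hβ : β ∈ Set.Ioo (0:ℝ) 1) (hφ : φ ∈ Set.Ioo 0 Real.pi) :
    β * Real.sin φ ≤ Real.sin (β * φ) := by
  have hc := strictConcaveOn_sin_Icc.concaveOn
  have h := hc.2 (x := 0) (y := φ)
    ⟨le_refl 0, Real.pi_pos.le⟩ ⟨hφ.1.le, hφ.2.le⟩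
    (by linarith [hβ.2] : (0:ℝ) ≤ 1 - β) hβ.1.le (by ring)
  simpa [Real.sin_zero, smul_eq_mul] using h

/-- Lemma 5.3(ii): for `α ∈ (0,1)` and `φ ∈ (0,π)`,
`(sin(αφ)/sin φ)^(α/(1−α)) · (sin((1−α)φ)/sin φ) ≥ (1−α) α^(α/(1−α))`. -/
theorem sin_ratio_rpow_ge
    (α φ : ℝ) (hα : α ∈ Set.Ioo (0:ℝ) 1) (hφ : φ ∈ Set.Ioo 0 Real.pi) :
    (Real.sin (α * φ) / Real.sin φ) ^ (α / (1 - α)) *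
        (Real.sin ((1 - α) * φ) / Real.sin φ)
      ≥ (1 - α) * α ^ (α / (1 - α)) := by
  have hs : 0 < Real.sin φ := Real.sin_pos_of_pos_of_lt_pi hφ.1 hφ.2
  have h1 : α ≤ Real.sin (α * φ) / Real.sin φ :=
    (le_div_iff₀ hs).mpr (sin_mul_ge α φ hα hφ)
  have h2 : 1 - α ≤ Real.sin ((1 - α) * φ) / Real.sin φ :=
    (le_div_iff₀ hs).mpr (sin_mul_ge (1 - α) φ ⟨by linarith [hα.2], by linarith [hα.1]⟩ hφ)
  have he : 0 ≤ α / (1 - α) := div_nonneg hα.1.le (by linarith [hα.2])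
  have h3 : α ^ (α / (1 - α)) ≤ (Real.sin (α * φ) / Real.sin φ) ^ (α / (1 - α)) :=
    Real.rpow_le_rpow hα.1.le h1 he
  have hp : 0 ≤ α ^ (α / (1 - α)) := Real.rpow_nonneg hα.1.le _
  calc (1 - α) * α ^ (α / (1 - α))
      ≤ (Real.sin (α * φ) / Real.sin φ) ^ (α / (1 - α)) *
          (Real.sin ((1 - α) * φ) / Real.sin φ) := by
        rw [mul_comm]
        exact mul_le_mul h3 h2 (by linarith [hα.2]) (le_trans hp h3)
    _ = _ := rfl
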